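/- arXiv:2507.16794 — 4 statements merged into one kernel-verified Lean document; each statement's English description precedes it below -/
import Mathlib

section
/- Let χ, n, χ₁, χ₂, n₁, n₂ be integers with χ₁, χ₂ ≥ 1, n₁, n₂ ≥ 0, χ₁ + χ₂ = χ, n₁ + n₂ = n, and such that 3χ - n, 3χ₁ - n₁, and 3χ₂ - n₂ are all non-negative even integers. Then there is a universal constant C > 0 such that ((3χ-n)/2)! / ( ((3χ₁-n₁)/2)! · ((3χ₂-n₂)/2)! ) ≤ C · χ · (3χ/2)^(3χ/2) / ( (3χ₁/2)^(3χ₁/2) · (3χ₂/2)^(3χ₂/2) ). -/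
open Real

/-- Bernoulli-type monotonicity: `(1+x/s)^s` is monotone in `s`. -/
lemma aux_bern {x s t : ℝ} (hx : 0 ≤ x) (hs : 0 < s) (hst : s ≤ t) :
    (1 + x / s) ^ s ≤ (1 + x / t) ^ t := by
  have ht : 0 < t := hs.trans_le hst
  have h1 : 1 + x / s ≤ (1 + x / t) ^ (t / s) := by
    have hxt : (0:ℝ) ≤ x / t := by positivity
    have hb := one_add_mul_self_le_rpow_one_add (s := x / t)
      (by linarith) ((one_le_div hs).mpr hst)
    calc 1 + x / s = 1 + t / s * (x / t) := by field_simp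
    _ ≤ (1 + x / t) ^ (t / s) := hb
  have h2 : ((1 + x / t) ^ (t / s)) ^ s = (1 + x / t) ^ t := by
    rw [← Real.rpow_mul (by positivity), div_mul_cancel₀ _ hs.ne']
  calc (1 + x / s) ^ s ≤ ((1 + x / t) ^ (t / s)) ^ s :=
        Real.rpow_le_rpow (by positivity) h1 hs.le
  _ = (1 + x / t) ^ t := h2

/-- Single-factor inequality: `((s+x)/s)^s ≤ ((t+u)/t)^t` for `s ≤ t`, `x ≤ u`. -/
lemma aux_factor (s : ℕ) {x t u : ℝ} (hx : 0 ≤ x) (hst : (s : ℝ) ≤ t) (ht : 0 < t)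
    (hxu : x ≤ u) :
    ((s : ℝ) + x) ^ s / (s : ℝ) ^ s ≤ (t + u) ^ t / t ^ t := by
  have hu : 0 ≤ u := hx.trans hxu
  have hrhs : (t + u) ^ t / t ^ t = (1 + u / t) ^ t := by
    rw [← Real.div_rpow (by positivity) ht.le]
    congr 1
    field_simp
  rcases Nat.eq_zero_or_pos s with hs0 | hs0
  · subst hs0
    simp only [pow_zero, Nat.cast_zero, div_one, hrhs]
    exact Real.one_le_rpow (by nlinarith [div_nonneg hu ht.le]) ht.le
  · have hsR : (0:ℝ) < s := by exact_mod_cast hs0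
    have hlhs : (1 + x / (s:ℝ)) ^ (s:ℝ) = ((s : ℝ) + x) ^ s / (s : ℝ) ^ s := by
      rw [show (1 : ℝ) + x / (s:ℝ) = ((s:ℝ) + x) / (s:ℝ) by rw [add_div, div_self hsR.ne'],
        Real.div_rpow (by positivity) hsR.le, Real.rpow_natCast, Real.rpow_natCast]
    rw [← hlhs, hrhs]
    calc (1 + x / (s:ℝ)) ^ (s:ℝ) ≤ (1 + x / t) ^ t := aux_bern hx hsR hst
    _ ≤ (1 + u / t) ^ t := by
        apply Real.rpow_le_rpow (by positivity) _ ht.le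
        gcongr

/-- `a!` times powers bound via binomial theorem, in `ℕ`. -/
lemma aux_nat (a₁ a₂ : ℕ) :
    (a₁ + a₂).factorial * (a₁ ^ a₁ * a₂ ^ a₂) ≤
      a₁.factorial * a₂.factorial * (a₁ + a₂) ^ (a₁ + a₂) := by
  have h1 : a₁ ^ a₁ * a₂ ^ a₂ * (a₁ + a₂).choose a₁ ≤ (a₁ + a₂) ^ (a₁ + a₂) := by
    rw [add_pow]
    have hmem : a₁ ∈ Finset.range (a₁ + a₂ + 1) := Finset.mem_range.mpr (by omega)
    have := Finset.single_le_sum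
      (f := fun k => a₁ ^ k * a₂ ^ (a₁ + a₂ - k) * (a₁ + a₂).choose k)
      (fun i _ => Nat.zero_le _) hmem
    simpa [Nat.add_sub_cancel_left] using this
  have h2 : (a₁ + a₂).choose a₁ * a₁.factorial * a₂.factorial = (a₁ + a₂).factorial := by
    have := Nat.choose_mul_factorial_mul_factorial (Nat.le_add_right a₁ a₂)
    simpa [Nat.add_sub_cancel_left] using this
  calc (a₁ + a₂).factorial * (a₁ ^ a₁ * a₂ ^ a₂)
      = a₁.factorial * a₂.factorial * (a₁ ^ a₁ * a₂ ^ a₂ * (a₁ + a₂).choose a₁) := by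
        rw [← h2]; ring
  _ ≤ a₁.factorial * a₂.factorial * (a₁ + a₂) ^ (a₁ + a₂) := Nat.mul_le_mul_left _ h1

/-- Key real inequality. -/
lemma aux_key (a₁ a₂ : ℕ) {m₁ m₂ : ℝ} (h₁ : (a₁ : ℝ) ≤ m₁) (h₂ : (a₂ : ℝ) ≤ m₂)
    (hm₁ : 0 < m₁) (hm₂ : 0 < m₂) :
    ((a₁ : ℝ) + a₂) ^ (a₁ + a₂) / ((a₁ : ℝ) ^ a₁ * (a₂ : ℝ) ^ a₂) ≤
      (m₁ + m₂) ^ (m₁ + m₂) / (m₁ ^ m₁ * m₂ ^ m₂) := by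
  have e1 : ((a₁ : ℝ) + a₂) ^ (a₁ + a₂) / ((a₁ : ℝ) ^ a₁ * (a₂ : ℝ) ^ a₂)
      = (((a₁:ℝ) + a₂) ^ a₁ / (a₁:ℝ) ^ a₁) * (((a₂:ℝ) + a₁) ^ a₂ / (a₂:ℝ) ^ a₂) := by
    rw [pow_add]
    rw [show ((a₂:ℝ) + a₁) = ((a₁:ℝ) + a₂) by ring]
    field_simp
  have e2 : (m₁ + m₂) ^ (m₁ + m₂) / (m₁ ^ m₁ * m₂ ^ m₂)
      = ((m₁ + m₂) ^ m₁ / m₁ ^ m₁) * ((m₂ + m₁) ^ m₂ / m₂ ^ m₂) := by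
    rw [Real.rpow_add (by positivity)]
    rw [show (m₂ + m₁) = (m₁ + m₂) by ring]
    field_simp
  rw [e1, e2]
  have f1 : ((a₁:ℝ) + a₂) ^ a₁ / (a₁:ℝ) ^ a₁ ≤ (m₁ + m₂) ^ m₁ / m₁ ^ m₁ :=
    aux_factor a₁ (by positivity) h₁ hm₁ h₂
  have f2 : ((a₂:ℝ) + a₁) ^ a₂ / (a₂:ℝ) ^ a₂ ≤ (m₂ + m₁) ^ m₂ / m₂ ^ m₂ :=
    aux_factor a₂ (by positivity) h₂ hm₂ h₁
  exact mul_le_mul f1 f2 (by positivity) (by positivity)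

/-- Lemma on factorial ratios: there is a universal constant `C > 0` such that whenever
`χ₁ + χ₂ = χ`, `n₁ + n₂ = n` with `χ₁, χ₂ ≥ 1`, and `3χ - n`, `3χ₁ - n₁`, `3χ₂ - n₂` are
non-negative even integers, then
`((3χ-n)/2)! / (((3χ₁-n₁)/2)! ((3χ₂-n₂)/2)!) ≤ C χ (3χ/2)^(3χ/2) / ((3χ₁/2)^(3χ₁/2) (3χ₂/2)^(3χ₂/2))`. -/
theorem stmt2 :
    ∃ C : ℝ, 0 < C ∧ ∀ χ n χ₁ χ₂ n₁ n₂ : ℕ,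
      1 ≤ χ₁ → 1 ≤ χ₂ → χ₁ + χ₂ = χ → n₁ + n₂ = n →
      n ≤ 3 * χ → n₁ ≤ 3 * χ₁ → n₂ ≤ 3 * χ₂ →
      2 ∣ (3 * χ - n) → 2 ∣ (3 * χ₁ - n₁) → 2 ∣ (3 * χ₂ - n₂) →
      (((3 * χ - n) / 2).factorial : ℝ) /
          ((((3 * χ₁ - n₁) / 2).factorial : ℝ) * (((3 * χ₂ - n₂) / 2).factorial : ℝ)) ≤
        C * χ * ((3 * χ : ℝ) / 2) ^ ((3 * χ : ℝ) / 2) /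
          (((3 * χ₁ : ℝ) / 2) ^ ((3 * χ₁ : ℝ) / 2) * ((3 * χ₂ : ℝ) / 2) ^ ((3 * χ₂ : ℝ) / 2)) := by
  refine ⟨1, one_pos, ?_⟩
  intro χ n χ₁ χ₂ n₁ n₂ hχ₁ hχ₂ hχ hn hn3 hn31 hn32 hd hd1 hd2
  set a₁ := (3 * χ₁ - n₁) / 2 with ha₁
  set a₂ := (3 * χ₂ - n₂) / 2 with ha₂
  have ha : (3 * χ - n) / 2 = a₁ + a₂ := by omega
  set m₁ : ℝ := (3 * χ₁ : ℝ) / 2 with hm₁def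
  set m₂ : ℝ := (3 * χ₂ : ℝ) / 2 with hm₂def
  have hm₁ : (0:ℝ) < m₁ := by
    have : (1:ℝ) ≤ (χ₁:ℝ) := by exact_mod_cast hχ₁
    rw [hm₁def]; positivity
  have hm₂ : (0:ℝ) < m₂ := by
    have : (1:ℝ) ≤ (χ₂:ℝ) := by exact_mod_cast hχ₂
    rw [hm₂def]; positivity
  have hca₁ : (a₁ : ℝ) ≤ m₁ := by
    have h : (2 * a₁ : ℕ) ≤ 3 * χ₁ := by omega
    have : (2 * a₁ : ℝ) ≤ 3 * χ₁ := by exact_mod_cast h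
    rw [hm₁def]; linarith
  have hca₂ : (a₂ : ℝ) ≤ m₂ := by
    have h : (2 * a₂ : ℕ) ≤ 3 * χ₂ := by omega
    have : (2 * a₂ : ℝ) ≤ 3 * χ₂ := by exact_mod_cast h
    rw [hm₂def]; linarith
  have hmm : m₁ + m₂ = (3 * χ : ℝ) / 2 := by
    rw [hm₁def, hm₂def]
    have : (χ₁ : ℝ) + χ₂ = χ := by exact_mod_cast hχ
    linarith
  -- step 1: factorial ratio ≤ power ratio (nat pows)
  have hposk : ∀ k : ℕ, (0:ℝ) < (k:ℝ) ^ k := by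
    intro k
    rcases Nat.eq_zero_or_pos k with h | h
    · simp [h]
    · exact pow_pos (by exact_mod_cast h) k
  have hp₁ : (0:ℝ) < (a₁:ℝ) ^ a₁ * (a₂:ℝ) ^ a₂ := mul_pos (hposk a₁) (hposk a₂)
  have step1 : (((a₁ + a₂).factorial : ℝ)) / ((a₁.factorial : ℝ) * (a₂.factorial : ℝ)) ≤
      ((a₁ : ℝ) + a₂) ^ (a₁ + a₂) / ((a₁ : ℝ) ^ a₁ * (a₂ : ℝ) ^ a₂) := by
    rw [div_le_div_iff₀ (by positivity) hp₁]
    have := aux_nat a₁ a₂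
    have hc : ((a₁ + a₂).factorial * (a₁ ^ a₁ * a₂ ^ a₂) : ℝ) ≤
        (a₁.factorial * a₂.factorial * (a₁ + a₂) ^ (a₁ + a₂) : ℝ) := by
      exact_mod_cast this
    push_cast at hc ⊢
    linarith
  have step2 := aux_key a₁ a₂ hca₁ hca₂ hm₁ hm₂
  -- positivity of RHS pieces
  have hXnn : (0:ℝ) ≤ (m₁ + m₂) ^ (m₁ + m₂) := Real.rpow_nonneg (by positivity) _
  have hY : (0:ℝ) < m₁ ^ m₁ * m₂ ^ m₂ :=
    mul_pos (Real.rpow_pos_of_pos hm₁ _) (Real.rpow_pos_of_pos hm₂ _)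
  have hχR : (1:ℝ) ≤ (χ : ℝ) := by
    have : 1 ≤ χ := by omega
    exact_mod_cast this
  have step3 : (m₁ + m₂) ^ (m₁ + m₂) / (m₁ ^ m₁ * m₂ ^ m₂) ≤
      1 * (χ:ℝ) * ((m₁ + m₂) ^ (m₁ + m₂)) / (m₁ ^ m₁ * m₂ ^ m₂) := by
    rw [one_mul, mul_div_assoc]
    exact le_mul_of_one_le_left (div_nonneg hXnn hY.le) hχR
  rw [ha, ← hmm]
  calc (((a₁ + a₂).factorial : ℝ)) / ((a₁.factorial : ℝ) * (a₂.factorial : ℝ))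
      ≤ ((a₁ : ℝ) + a₂) ^ (a₁ + a₂) / ((a₁ : ℝ) ^ a₁ * (a₂ : ℝ) ^ a₂) := step1
  _ ≤ (m₁ + m₂) ^ (m₁ + m₂) / (m₁ ^ m₁ * m₂ ^ m₂) := step2
  _ ≤ 1 * (χ:ℝ) * ((m₁ + m₂) ^ (m₁ + m₂)) / (m₁ ^ m₁ * m₂ ^ m₂) := step3
end

section
/- For any finite connected graph G, the Cheeger constant h(G) = min over nonempty Ω ⊆ V(G) with |Ω| ≤ |V(G)|/2 of |∂Ω|/|Ω| is attained by some subset Ω such that both the induced subgraph on Ω and the induced subgraph on V(G)∖Ω are connected. -/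
/-- Number of edges with exactly one endpoint in `s`. -/
noncomputable def ebdry {V : Type*} (G : SimpleGraph V) (s : Set V) : ℕ :=
  {p : V × V | p.1 ∈ s ∧ p.2 ∉ s ∧ G.Adj p.1 p.2}.ncard

namespace CheegerAux

variable {V : Type*} [Finite V] {G : SimpleGraph V}

/-- Reachability in an induced subgraph is monotone in the vertex set. -/
lemma reach_mono {s t : Set V} (hst : s ⊆ t) {a b : ↑s}
    (h : (G.induce s).Reachable a b) :
    (G.induce t).Reachable ⟨a.1, hst a.2⟩ ⟨b.1, hst b.2⟩ := by
  let f : G.induce s →g G.induce t :=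
    { toFun := fun v => ⟨v.1, hst v.2⟩
      map_rel' := fun {x y} hxy => hxy }
  exact h.map f

/-- From any vertex outside `K` one can reach `Ω` inside `Kᶜ`, following a `G`-walk
to `Ω`, provided `K ⊆ Ωᶜ` is closed under adjacency inside `Ωᶜ`. -/
lemma walk_reach {Ω K : Set V} (hK : K ⊆ Ωᶜ)
    (hcl : ∀ x ∈ K, ∀ y ∈ Ωᶜ, G.Adj x y → y ∈ K) :
    ∀ {v u : V} (_ : G.Walk v u) (hv : v ∈ Kᶜ) (_ : u ∈ Ω),
      ∃ u' : ↑(Kᶜ), (u' : V) ∈ Ω ∧ (G.induce Kᶜ).Reachable ⟨v, hv⟩ u' := by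
  intro v u w
  induction w with
  | nil =>
    intro hv hu
    exact ⟨⟨_, hv⟩, hu, SimpleGraph.Reachable.refl _⟩
  | @cons v x u h p ih =>
    intro hv hu
    by_cases hvΩ : v ∈ Ω
    · exact ⟨⟨v, hv⟩, hvΩ, SimpleGraph.Reachable.refl _⟩
    · have hx : x ∈ Kᶜ := by
        intro hxK
        exact hv (hcl _ hxK v hvΩ h.symm)
      obtain ⟨u', hu', hr⟩ := ih hx hu
      refine ⟨u', hu', SimpleGraph.Reachable.trans ?_ hr⟩
      exact SimpleGraph.Adj.reachable (show G.Adj v x from h)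

/-- If `Ω` is nonempty with connected induced subgraph, and `K ⊆ Ωᶜ` is closed under
adjacency within `Ωᶜ`, then the induced subgraph on `Kᶜ` is connected. -/
lemma compl_connected (hG : G.Connected) {Ω K : Set V} (hΩne : Ω.Nonempty)
    (hΩc : (G.induce Ω).Connected) (hK : K ⊆ Ωᶜ)
    (hcl : ∀ x ∈ K, ∀ y ∈ Ωᶜ, G.Adj x y → y ∈ K) :
    (G.induce Kᶜ).Connected := by
  have hΩsub : Ω ⊆ Kᶜ := fun x hx hxK => (hK hxK) hx
  obtain ⟨o, ho⟩ := hΩne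
  rw [SimpleGraph.connected_iff]
  refine ⟨?_, ⟨⟨o, hΩsub ho⟩⟩⟩
  rintro ⟨a, ha⟩ ⟨b, hb⟩
  obtain ⟨ua, hua, hra⟩ := walk_reach hK hcl ((hG.preconnected a o).some) ha ho
  obtain ⟨ub, hub, hrb⟩ := walk_reach hK hcl ((hG.preconnected b o).some) hb ho
  have hmid : (G.induce Kᶜ).Reachable ⟨(ua : V), hΩsub hua⟩ ⟨(ub : V), hΩsub hub⟩ :=
    reach_mono hΩsub (hΩc.preconnected ⟨(ua : V), hua⟩ ⟨(ub : V), hub⟩)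
  exact hra.trans (hmid.trans hrb.symm)

lemma ebdry_split {A B : Set V} (hdisj : Disjoint A B)
    (hAB : ∀ a ∈ A, ∀ b ∈ B, ¬ G.Adj a b) :
    ebdry G (A ∪ B) = ebdry G A + ebdry G B := by
  unfold ebdry
  have hset : {p : V × V | p.1 ∈ A ∪ B ∧ p.2 ∉ A ∪ B ∧ G.Adj p.1 p.2} =
      {p : V × V | p.1 ∈ A ∧ p.2 ∉ A ∧ G.Adj p.1 p.2} ∪
      {p : V × V | p.1 ∈ B ∧ p.2 ∉ B ∧ G.Adj p.1 p.2} := by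
    ext ⟨x, y⟩
    simp only [Set.mem_setOf_eq, Set.mem_union]
    constructor
    · rintro ⟨hx | hx, hy, hadj⟩
      · exact Or.inl ⟨hx, fun hyA => hy (Or.inl hyA), hadj⟩
      · exact Or.inr ⟨hx, fun hyB => hy (Or.inr hyB), hadj⟩
    · rintro (⟨hx, hy, hadj⟩ | ⟨hx, hy, hadj⟩)
      · refine ⟨Or.inl hx, ?_, hadj⟩
        rintro (hyA | hyB)
        · exact hy hyA
        · exact hAB x hx y hyB hadj
      · refine ⟨Or.inr hx, ?_, hadj⟩
        rintro (hyA | hyB)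
        · exact hAB y hyA x hx hadj.symm
        · exact hy hyB
  rw [hset, Set.ncard_union_eq ?_ (Set.toFinite _) (Set.toFinite _)]
  rw [Set.disjoint_left]
  rintro ⟨x, y⟩ ⟨hx, -, -⟩ ⟨hx', -, -⟩
  exact (Set.disjoint_left.mp hdisj hx) hx'

lemma ebdry_compl (s : Set V) : ebdry G sᶜ = ebdry G s := by
  unfold ebdry
  have hset : {p : V × V | p.1 ∈ sᶜ ∧ p.2 ∉ sᶜ ∧ G.Adj p.1 p.2} =
      Prod.swap '' {p : V × V | p.1 ∈ s ∧ p.2 ∉ s ∧ G.Adj p.1 p.2} := by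
    ext ⟨x, y⟩
    simp only [Set.mem_setOf_eq, Set.mem_image, Set.mem_compl_iff, Prod.exists]
    constructor
    · rintro ⟨hx, hy, hadj⟩
      exact ⟨y, x, ⟨not_not.mp hy, hx, hadj.symm⟩, rfl⟩
    · rintro ⟨a, b, ⟨ha, hb, hadj⟩, heq⟩
      obtain ⟨rfl, rfl⟩ : b = x ∧ a = y := by
        simpa [Prod.ext_iff] using heq
      exact ⟨hb, not_not.mpr ha, hadj.symm⟩
  rw [hset, Set.ncard_image_of_injective _ Prod.swap_injective]

/-- Key lemma: inside any nonempty set `s` there is a nonempty "connected component"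
`K` (connected, closed under adjacency within `s`) whose boundary ratio is at most
that of `s` (in cross-multiplied form). -/
lemma exists_good_component (G : SimpleGraph V) :
    ∀ n (s : Set V), s.ncard ≤ n → s.Nonempty →
    ∃ K, K ⊆ s ∧ K.Nonempty ∧ (G.induce K).Connected ∧
      (∀ x ∈ K, ∀ y ∈ s, G.Adj x y → y ∈ K) ∧
      ebdry G K * s.ncard ≤ ebdry G s * K.ncard := by
  intro n
  induction n with
  | zero =>
    intro s hs hne
    exact absurd ((Set.ncard_eq_zero (Set.toFinite s)).mp (Nat.le_zero.mp hs)) hne.ne_empty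
  | succ n ih =>
    intro s hcard hne
    by_cases hc : (G.induce s).Connected
    · exact ⟨s, le_refl _, hne, hc, fun x _ y hy _ => hy, le_refl _⟩
    · -- split s into two nonempty parts with no edges between them
      have hne' : Nonempty ↑s := hne.to_subtype
      rw [SimpleGraph.connected_iff] at hc
      push_neg at hc
      have hnp : ¬ (G.induce s).Preconnected := fun h => (hc h).false hne'.some
      rw [SimpleGraph.Preconnected] at hnp
      push_neg at hnp
      obtain ⟨a, b, hab⟩ := hnp
      set A : Set V := {w : V | ∃ h : w ∈ s, (G.induce s).Reachable a ⟨w, h⟩} with hAdef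
      set B : Set V := s \ A with hBdef
      have hAs : A ⊆ s := fun w hw => hw.1
      have haA : (a : V) ∈ A := ⟨a.2, SimpleGraph.Reachable.refl _⟩
      have hbB : (b : V) ∈ B := ⟨b.2, fun hbA => hab (hbA.2.trans (by rfl))⟩
      have hunion : A ∪ B = s := by
        apply Set.Subset.antisymm
        · rintro w (hw | hw)
          · exact hAs hw
          · exact hw.1
        · intro w hw
          by_cases h : w ∈ A
          · exact Or.inl h
          · exact Or.inr ⟨hw, h⟩
      have hdisj : Disjoint A B := Set.disjoint_left.mpr (fun w hw hw' => hw'.2 hw)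
      have hnoedge : ∀ x ∈ A, ∀ y ∈ B, ¬ G.Adj x y := by
        rintro x ⟨hxs, hxr⟩ y hy hadj
        exact hy.2 ⟨hy.1, hxr.trans (SimpleGraph.Adj.reachable
          (show G.Adj x y from hadj : (G.induce s).Adj ⟨x, hxs⟩ ⟨y, hy.1⟩))⟩
      -- inner assembly, symmetric in (A, B)
      have key : ∀ A' B' : Set V, A' ∪ B' = s → Disjoint A' B' → A'.Nonempty →
          B'.Nonempty → (∀ x ∈ A', ∀ y ∈ B', ¬ G.Adj x y) →
          ebdry G A' * B'.ncard ≤ ebdry G B' * A'.ncard →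
          ∃ K, K ⊆ s ∧ K.Nonempty ∧ (G.induce K).Connected ∧
            (∀ x ∈ K, ∀ y ∈ s, G.Adj x y → y ∈ K) ∧
            ebdry G K * s.ncard ≤ ebdry G s * K.ncard := by
        intro A' B' hu hd hA'ne hB'ne hne2 hmed
        have hA's : A' ⊆ s := hu ▸ Set.subset_union_left
        have hssA' : A' ⊂ s := by
          refine ⟨hA's, fun hsub => ?_⟩
          obtain ⟨y, hy⟩ := hB'ne
          exact (Set.disjoint_left.mp hd (hsub (hu ▸ Set.mem_union_right A' hy)) hy)
        have hA'lt : A'.ncard < s.ncard := Set.ncard_lt_ncard hssA' (Set.toFinite s)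
        obtain ⟨K, hKA', hKne, hKconn, hKcl, hKineq⟩ :=
          ih A' (by omega) hA'ne
        have hsplit : ebdry G s = ebdry G A' + ebdry G B' := by
          rw [← hu]; exact ebdry_split hd hne2
        have hcardsplit : s.ncard = A'.ncard + B'.ncard := by
          rw [← hu]; exact Set.ncard_union_eq hd (Set.toFinite _) (Set.toFinite _)
        -- mediant: ratio A' ≤ ratio s (cross-multiplied)
        have h2 : ebdry G A' * s.ncard ≤ ebdry G s * A'.ncard := by
          rw [hsplit, hcardsplit]
          calc ebdry G A' * (A'.ncard + B'.ncard)
              = ebdry G A' * A'.ncard + ebdry G A' * B'.ncard := by ring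
            _ ≤ ebdry G A' * A'.ncard + ebdry G B' * A'.ncard :=
                Nat.add_le_add_left hmed _
            _ = (ebdry G A' + ebdry G B') * A'.ncard := by ring
        have hA'pos : 0 < A'.ncard :=
          (Set.ncard_pos (Set.toFinite _)).mpr hA'ne
        refine ⟨K, hKA'.trans hA's, hKne, hKconn, ?_, ?_⟩
        · intro x hx y hys hadj
          have : y ∈ A' ∪ B' := hu.symm ▸ hys
          rcases this with hyA | hyB
          · exact hKcl x hx y hyA hadj
          · exact absurd hadj (hne2 x (hKA' hx) y hyB)
        · have h3 : ebdry G K * s.ncard * A'.ncard ≤ ebdry G s * K.ncard * A'.ncard := by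
            calc ebdry G K * s.ncard * A'.ncard
                = (ebdry G K * A'.ncard) * s.ncard := by ring
              _ ≤ (ebdry G A' * K.ncard) * s.ncard := Nat.mul_le_mul_right _ hKineq
              _ = (ebdry G A' * s.ncard) * K.ncard := by ring
              _ ≤ (ebdry G s * A'.ncard) * K.ncard := Nat.mul_le_mul_right _ h2
              _ = ebdry G s * K.ncard * A'.ncard := by ring
          exact Nat.le_of_mul_le_mul_right h3 hA'pos
      have hAne : A.Nonempty := ⟨a, haA⟩
      have hBne : B.Nonempty := ⟨b, hbB⟩
      rcases le_total (ebdry G A * B.ncard) (ebdry G B * A.ncard) with hm | hm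
      · exact key A B hunion hdisj hAne hBne hnoedge hm
      · exact key B A (Set.union_comm B A ▸ hunion) hdisj.symm hBne hAne
          (fun x hx y hy hadj => hnoedge y hy x hx hadj.symm) hm

end CheegerAux

open CheegerAux in
/-- The Cheeger constant of a finite connected graph is attained by a subset `Ω` such
that both `Ω` and its complement induce connected subgraphs. -/
theorem stmt10 {V : Type*} [Finite V] (G : SimpleGraph V) (hconn : G.Connected)
    (hV : 2 ≤ Nat.card V) :
    ∃ Ω : Set V, Ω.Nonempty ∧ 2 * Ω.ncard ≤ Nat.card V ∧
      (G.induce Ω).Connected ∧ (G.induce Ωᶜ).Connected ∧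
      ∀ Ω' : Set V, Ω'.Nonempty → 2 * Ω'.ncard ≤ Nat.card V →
        (ebdry G Ω : ℝ) / (Ω.ncard : ℝ) ≤ (ebdry G Ω' : ℝ) / (Ω'.ncard : ℝ) := by
  have hVne : Nonempty V := Nat.card_pos_iff.mp (by omega) |>.1
  obtain ⟨v₀⟩ := hVne
  -- the set of admissible subsets is a nonempty finite type
  have hPne : Nonempty {Ω : Set V // Ω.Nonempty ∧ 2 * Ω.ncard ≤ Nat.card V} := by
    refine ⟨⟨{v₀}, ⟨v₀, rfl⟩, ?_⟩⟩
    rw [Set.ncard_singleton]; omega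
  obtain ⟨⟨Ωh, hΩhne, hΩhcard⟩, hmin⟩ :=
    Finite.exists_min (fun Ω : {Ω : Set V // Ω.Nonempty ∧ 2 * Ω.ncard ≤ Nat.card V} =>
      (ebdry G Ω.1 : ℝ) / (Ω.1.ncard : ℝ))
  -- extract a connected minimizer Ω
  obtain ⟨Ω, hΩsub, hΩne, hΩconn, -, hΩineq⟩ :=
    exists_good_component G Ωh.ncard Ωh le_rfl hΩhne
  have hΩcard : 2 * Ω.ncard ≤ Nat.card V :=
    le_trans (by have := Set.ncard_le_ncard hΩsub (Set.toFinite _); omega) hΩhcard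
  have hΩpos : 0 < Ω.ncard := (Set.ncard_pos (Set.toFinite _)).mpr hΩne
  have hΩhpos : 0 < Ωh.ncard := (Set.ncard_pos (Set.toFinite _)).mpr hΩhne
  have hcompl : Ω.ncard + Ωᶜ.ncard = Nat.card V := Set.ncard_add_ncard_compl Ω
  have hΩcne : Ωᶜ.Nonempty := by
    rw [← Set.ncard_pos (Set.toFinite _)]; omega
  have hΩcpos : 0 < Ωᶜ.ncard := (Set.ncard_pos (Set.toFinite _)).mpr hΩcne
  -- Ω is a global minimizer (real ratios)
  have hΩmin : ∀ Ω' : Set V, Ω'.Nonempty → 2 * Ω'.ncard ≤ Nat.card V →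
      (ebdry G Ω : ℝ) / (Ω.ncard : ℝ) ≤ (ebdry G Ω' : ℝ) / (Ω'.ncard : ℝ) := by
    intro Ω' h1 h2
    refine le_trans ?_ (hmin ⟨Ω', h1, h2⟩)
    rw [div_le_div_iff₀ (by exact_mod_cast hΩpos) (by exact_mod_cast hΩhpos)]
    exact_mod_cast hΩineq
  -- find a good component K of Ωᶜ
  obtain ⟨K, hKsub, hKne, hKconn, hKcl, hKineq⟩ :=
    exists_good_component G Ωᶜ.ncard Ωᶜ le_rfl hΩcne
  have hKpos : 0 < K.ncard := (Set.ncard_pos (Set.toFinite _)).mpr hKne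
  have hKcardle : K.ncard ≤ Ωᶜ.ncard := Set.ncard_le_ncard hKsub (Set.toFinite _)
  have hKineq' : ebdry G K * Ωᶜ.ncard ≤ ebdry G Ω * K.ncard := by
    rwa [ebdry_compl] at hKineq
  -- ratio of K is at most ratio of Ω
  have hrK : (ebdry G K : ℝ) / (K.ncard : ℝ) ≤ (ebdry G Ω : ℝ) / (Ω.ncard : ℝ) := by
    have h1 : (ebdry G K : ℝ) / (K.ncard : ℝ) ≤ (ebdry G Ω : ℝ) / (Ωᶜ.ncard : ℝ) := by
      rw [div_le_div_iff₀ (by exact_mod_cast hKpos) (by exact_mod_cast hΩcpos)]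
      exact_mod_cast hKineq'
    refine h1.trans ?_
    apply div_le_div_of_nonneg_left (by positivity) (by exact_mod_cast hΩpos)
    exact_mod_cast (by omega : Ω.ncard ≤ Ωᶜ.ncard)
  have hKcconn : (G.induce Kᶜ).Connected :=
    compl_connected hconn hΩne hΩconn hKsub hKcl
  by_cases h2K : 2 * K.ncard ≤ Nat.card V
  · -- output K itself
    exact ⟨K, hKne, h2K, hKconn, hKcconn,
      fun Ω' h1 h2 => hrK.trans (hΩmin Ω' h1 h2)⟩
  · -- output Kᶜ
    have hΩKc : Ω ⊆ Kᶜ := fun x hx hxK => (hKsub hxK) hx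
    have hKcompl : K.ncard + Kᶜ.ncard = Nat.card V := Set.ncard_add_ncard_compl K
    have hKcne : Kᶜ.Nonempty := by
      obtain ⟨w, hw⟩ := hΩne
      exact ⟨w, hΩKc hw⟩
    have h2Kc : 2 * Kᶜ.ncard ≤ Nat.card V := by omega
    have hKcc : (G.induce Kᶜᶜ).Connected := by
      rw [compl_compl]; exact hKconn
    have hebd : ebdry G Kᶜ ≤ ebdry G Ω := by
      unfold ebdry
      refine Set.ncard_le_ncard ?_ (Set.toFinite _)
      rintro ⟨x, y⟩ ⟨hx, hy, hadj⟩
      have hyK : y ∈ K := not_not.mp hy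
      have hxΩ : x ∈ Ω := by
        by_contra hxΩc
        exact hx (hKcl y hyK x hxΩc hadj.symm)
      exact ⟨hxΩ, fun hyΩ => (hKsub hyK) hyΩ, hadj⟩
    have hcardΩ : Ω.ncard ≤ Kᶜ.ncard := Set.ncard_le_ncard hΩKc (Set.toFinite _)
    have hrKc : (ebdry G Kᶜ : ℝ) / (Kᶜ.ncard : ℝ) ≤ (ebdry G Ω : ℝ) / (Ω.ncard : ℝ) := by
      apply div_le_div₀ (by positivity) (by exact_mod_cast hebd)
        (by exact_mod_cast hΩpos) (by exact_mod_cast hcardΩ)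
    exact ⟨Kᶜ, hKcne, h2Kc, hKcconn, hKcc,
      fun Ω' h1 h2 => hrKc.trans (hΩmin Ω' h1 h2)⟩
end

section
/- Let G be a finite connected graph with boundary δG (the vertices of degree 1). Then for every 0 ≤ i ≤ |δG| - 1, the i-th Steklov eigenvalue dominates the i-th Laplacian eigenvalue: σ_i(G) ≥ λ_i(G). -/
/-- Degree of a vertex, as the number of neighbours. -/
noncomputable def degN {V : Type*} (G : SimpleGraph V) (v : V) : ℕ := {w | G.Adj v w}.ncard

open Classical in
/-- The Dirichlet energy `Σ_{{x,y} ∈ E} (f x - f y)²` (each edge counted once). -/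
noncomputable def quadForm {V : Type*} [Fintype V] (G : SimpleGraph V) (f : V → ℝ) : ℝ :=
  (1 / 2) * ∑ v : V, ∑ w : V, if G.Adj v w then (f v - f w) ^ 2 else 0

/-- The degree-weighted square norm `Σ_v deg(v) f(v)²`. -/
noncomputable def lapNormSq {V : Type*} [Fintype V] (G : SimpleGraph V) (f : V → ℝ) : ℝ :=
  ∑ v : V, (degN G v : ℝ) * f v ^ 2

/-- The boundary square norm `Σ_{x ∈ δG} f(x)²`, where `δG` is the set of degree-1 vertices. -/
noncomputable def stekNormSq {V : Type*} [Fintype V] (G : SimpleGraph V) (f : V → ℝ) : ℝ :=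
  ∑ v : V, if degN G v = 1 then f v ^ 2 else 0

/-- The `k`-th eigenvalue of the normalized Laplacian, via the Courant–Fischer
min-max characterization. -/
noncomputable def lapEig {V : Type*} [Fintype V] (G : SimpleGraph V) (k : ℕ) : ℝ :=
  sInf {r : ℝ | ∃ W : Submodule ℝ (V → ℝ), Module.finrank ℝ W = k + 1 ∧
    ∀ f ∈ W, quadForm G f ≤ r * lapNormSq G f}

/-- The `k`-th Steklov eigenvalue of `(G, δG)`, via the min-max characterization. -/
noncomputable def stekEig {V : Type*} [Fintype V] (G : SimpleGraph V) (k : ℕ) : ℝ :=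
  sInf {r : ℝ | ∃ W : Submodule ℝ (V → ℝ), Module.finrank ℝ W = k + 1 ∧
    ∀ f ∈ W, quadForm G f ≤ r * stekNormSq G f}

open Classical

lemma degN_eq_card {V : Type*} [Fintype V] (G : SimpleGraph V) (v : V) :
    degN G v = (Finset.univ.filter (G.Adj v)).card := by
  rw [degN, Set.ncard_eq_toFinset_card']
  congr 1
  ext w
  simp

lemma quadForm_nonneg {V : Type*} [Fintype V] (G : SimpleGraph V) (f : V → ℝ) :
    0 ≤ quadForm G f := by
  unfold quadForm
  have : (0:ℝ) ≤ ∑ v : V, ∑ w : V, if G.Adj v w then (f v - f w) ^ 2 else 0 := by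
    apply Finset.sum_nonneg; intro v _
    apply Finset.sum_nonneg; intro w _
    split <;> positivity
  linarith

lemma lapNormSq_nonneg {V : Type*} [Fintype V] (G : SimpleGraph V) (f : V → ℝ) :
    0 ≤ lapNormSq G f := by
  apply Finset.sum_nonneg; intro v _; positivity

lemma stekNormSq_nonneg {V : Type*} [Fintype V] (G : SimpleGraph V) (f : V → ℝ) :
    0 ≤ stekNormSq G f := by
  apply Finset.sum_nonneg; intro v _; split <;> positivity

lemma stek_le_lap {V : Type*} [Fintype V] (G : SimpleGraph V) (f : V → ℝ) :
    stekNormSq G f ≤ lapNormSq G f := by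
  apply Finset.sum_le_sum
  intro v _
  by_cases h : degN G v = 1
  · simp [h]
  · simp only [h, if_false]
    positivity

lemma quad_le_two_lap {V : Type*} [Fintype V] (G : SimpleGraph V) (f : V → ℝ) :
    quadForm G f ≤ 2 * lapNormSq G f := by
  have key : ∀ g : V → ℝ, (∑ v : V, ∑ w : V, if G.Adj v w then g v ^ 2 else 0)
      = lapNormSq G g := by
    intro g
    unfold lapNormSq
    apply Finset.sum_congr rfl
    intro v _
    rw [← Finset.sum_filter, Finset.sum_const, nsmul_eq_mul, degN_eq_card]
  have key2 : (∑ v : V, ∑ w : V, if G.Adj v w then f w ^ 2 else 0) = lapNormSq G f := by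
    rw [Finset.sum_comm]
    have : ∀ w v : V, (if G.Adj v w then f w ^ 2 else 0) = (if G.Adj w v then f w ^ 2 else 0) := by
      intro w v; simp [G.adj_comm]
    calc (∑ w : V, ∑ v : V, if G.Adj v w then f w ^ 2 else 0)
        = ∑ w : V, ∑ v : V, if G.Adj w v then f w ^ 2 else 0 := by
          apply Finset.sum_congr rfl; intro w _
          apply Finset.sum_congr rfl; intro v _
          exact this w v
      _ = lapNormSq G f := key f
  have hb : (∑ v : V, ∑ w : V, if G.Adj v w then (f v - f w) ^ 2 else 0)
      ≤ (∑ v : V, ∑ w : V, if G.Adj v w then 2 * f v ^ 2 + 2 * f w ^ 2 else 0) := by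
    apply Finset.sum_le_sum; intro v _
    apply Finset.sum_le_sum; intro w _
    split
    · nlinarith [sq_nonneg (f v + f w)]
    · exact le_refl 0
  have hsplit : (∑ v : V, ∑ w : V, if G.Adj v w then 2 * f v ^ 2 + 2 * f w ^ 2 else 0)
      = 2 * lapNormSq G f + 2 * lapNormSq G f := by
    have : ∀ v w : V, (if G.Adj v w then 2 * f v ^ 2 + 2 * f w ^ 2 else 0)
        = 2 * (if G.Adj v w then f v ^ 2 else 0) + 2 * (if G.Adj v w then f w ^ 2 else 0) := by
      intro v w; split <;> ring
    simp_rw [this, Finset.sum_add_distrib, ← Finset.mul_sum]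
    rw [key f, key2]
  unfold quadForm
  linarith

/-- In a connected graph where the energy vanishes, the function is constant. -/
lemma quad_zero_const {V : Type*} [Fintype V] (G : SimpleGraph V) (f : V → ℝ)
    (h : quadForm G f = 0) : ∀ v w : V, G.Reachable v w → f v = f w := by
  have hadj : ∀ v w : V, G.Adj v w → f v = f w := by
    intro v w hvw
    have hnn : ∀ v ∈ Finset.univ, (0:ℝ) ≤ ∑ w : V, if G.Adj v w then (f v - f w) ^ 2 else 0 := by
      intro v _; apply Finset.sum_nonneg; intro w _; split <;> positivity
    have hsum : (∑ v : V, ∑ w : V, if G.Adj v w then (f v - f w) ^ 2 else 0) = 0 := by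
      unfold quadForm at h; linarith
    have h1 := (Finset.sum_eq_zero_iff_of_nonneg hnn).mp hsum v (Finset.mem_univ v)
    have hnn2 : ∀ w ∈ Finset.univ, (0:ℝ) ≤ (if G.Adj v w then (f v - f w) ^ 2 else 0) := by
      intro w _; split <;> positivity
    have h2 := (Finset.sum_eq_zero_iff_of_nonneg hnn2).mp h1 w (Finset.mem_univ w)
    rw [if_pos hvw] at h2
    have := sq_eq_zero_iff.mp h2
    linarith
  intro v w hr
  obtain ⟨p⟩ := hr
  induction p with
  | nil => rfl
  | cons h' p ih => exact (hadj _ _ h').trans ih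

lemma deg_ge_one {V : Type*} [Fintype V] (G : SimpleGraph V) (hconn : G.Connected)
    (u : V) (hu : degN G u = 1) (v : V) : 1 ≤ degN G v := by
  have hr : G.Reachable v u := hconn.preconnected v u
  obtain ⟨p⟩ := hr
  cases p with
  | nil => exact le_of_eq hu.symm
  | cons h _ =>
    have : {w | G.Adj v w}.Nonempty := ⟨_, h⟩
    exact Set.ncard_pos (Set.toFinite _) |>.mpr this

/-- For a finite connected graph with boundary `δG`, the Steklov eigenvalues dominate
the Laplacian eigenvalues: `σ_i(G) ≥ λ_i(G)` for `0 ≤ i ≤ |δG| - 1`. -/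
theorem stmt12 {V : Type*} [Fintype V] (G : SimpleGraph V) (hconn : G.Connected)
    (hδ : 1 ≤ {v | degN G v = 1}.ncard) :
    ∀ i : ℕ, i ≤ {v | degN G v = 1}.ncard - 1 → lapEig G i ≤ stekEig G i := by
  intro i hi
  obtain ⟨u, hu⟩ : ∃ u, degN G u = 1 := by
    have : {v | degN G v = 1}.Nonempty := by
      rw [← Set.ncard_pos (Set.toFinite _)]; omega
    exact this
  set L := {r : ℝ | ∃ W : Submodule ℝ (V → ℝ), Module.finrank ℝ W = i + 1 ∧
    ∀ f ∈ W, quadForm G f ≤ r * lapNormSq G f} with hL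
  set Sk := {r : ℝ | ∃ W : Submodule ℝ (V → ℝ), Module.finrank ℝ W = i + 1 ∧
    ∀ f ∈ W, quadForm G f ≤ r * stekNormSq G f} with hSk
  -- Sk ⊆ L
  have hsub : Sk ⊆ L := by
    intro r ⟨W, hW, hbound⟩
    rcases le_or_gt 0 r with hr | hr
    · exact ⟨W, hW, fun f hf => (hbound f hf).trans
        (mul_le_mul_of_nonneg_left (stek_le_lap G f) hr)⟩
    · exfalso
      have hWbot : W = ⊥ := by
        rw [Submodule.eq_bot_iff]
        intro f hf
        have h1 := hbound f hf
        have h2 := quadForm_nonneg G f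
        have h3 := stekNormSq_nonneg G f
        have hq0 : quadForm G f = 0 := by nlinarith
        have hs0 : stekNormSq G f = 0 := by nlinarith
        have hconst := quad_zero_const G f hq0
        have hfu : f u = 0 := by
          have hnn : ∀ v ∈ Finset.univ, (0:ℝ) ≤ (if degN G v = 1 then f v ^ 2 else 0) := by
            intro v _; split <;> positivity
          have := (Finset.sum_eq_zero_iff_of_nonneg hnn).mp hs0 u (Finset.mem_univ u)
          rw [if_pos hu] at this
          exact sq_eq_zero_iff.mp this
        funext v
        rw [show f v = f u from hconst v u (hconn.preconnected v u), hfu]; rfl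
      rw [hWbot, finrank_bot] at hW
      omega
  -- L is bounded below by 0
  have hbdd : BddBelow L := by
    refine ⟨0, fun r ⟨W, hW, hbound⟩ => ?_⟩
    by_contra hr
    push_neg at hr
    have hWbot : W = ⊥ := by
      rw [Submodule.eq_bot_iff]
      intro f hf
      have h1 := hbound f hf
      have h2 := quadForm_nonneg G f
      have h3 := lapNormSq_nonneg G f
      have hs0 : lapNormSq G f = 0 := by nlinarith
      have hnn : ∀ v ∈ Finset.univ, (0:ℝ) ≤ (degN G v : ℝ) * f v ^ 2 := by
        intro v _; positivity
      funext v
      have := (Finset.sum_eq_zero_iff_of_nonneg hnn).mp hs0 v (Finset.mem_univ v)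
      have hd := deg_ge_one G hconn u hu v
      have hdpos : (0:ℝ) < (degN G v : ℝ) := by exact_mod_cast hd
      have : f v ^ 2 = 0 := by
        rcases mul_eq_zero.mp this with h | h
        · exact absurd h (ne_of_gt hdpos)
        · exact h
      exact sq_eq_zero_iff.mp this
    rw [hWbot, finrank_bot] at hW
    omega
  -- Sk is nonempty : use span of boundary indicators, with r = 2
  have hne : Sk.Nonempty := by
    have hcard : i + 1 ≤ {v | degN G v = 1}.ncard := by omega
    obtain ⟨t, hts, htcard⟩ := Set.exists_subset_card_eq hcard
    have htfin : t.Finite := (Set.toFinite _).subset hts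
    set S : Finset V := htfin.toFinset with hS
    have hScard : S.card = i + 1 := by
      rw [hS, ← Set.ncard_eq_toFinset_card t htfin]; exact htcard
    have hSbd : ∀ v ∈ S, degN G v = 1 := by
      intro v hv
      exact hts (htfin.mem_toFinset.mp hv)
    set g : S → (V → ℝ) := fun v => Pi.single (v : V) 1 with hg
    have hli : LinearIndependent ℝ g := by
      have hbasis : LinearIndependent ℝ (fun v : V => Pi.single v (1:ℝ)) := by
        have := (Pi.basisFun ℝ V).linearIndependent
        convert this using 1
        funext v
        rw [Pi.basisFun_apply]
      exact hbasis.comp (Subtype.val : S → V) Subtype.val_injective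
    set W := Submodule.span ℝ (Set.range g) with hW
    have hfr : Module.finrank ℝ W = i + 1 := by
      rw [hW, finrank_span_eq_card hli, Fintype.card_coe, hScard]
    -- every f ∈ W vanishes off S
    have hvanish : ∀ f ∈ W, ∀ v : V, v ∉ S → f v = 0 := by
      have hle : W ≤ Submodule.pi {v : V | v ∉ S} (fun _ => (⊥ : Submodule ℝ ℝ)) := by
        rw [hW, Submodule.span_le]
        rintro _ ⟨x, rfl⟩
        intro v hv
        simp only [Submodule.mem_bot]
        have hvx : v ≠ (x : V) := by rintro rfl; exact hv x.2
        exact Pi.single_eq_of_ne hvx 1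
      intro f hf v hv
      have := hle hf v hv
      simpa using this
    refine ⟨2, W, hfr, fun f hf => ?_⟩
    have heq : lapNormSq G f = stekNormSq G f := by
      unfold lapNormSq stekNormSq
      apply Finset.sum_congr rfl
      intro v _
      by_cases h : degN G v = 1
      · simp [h]
      · have hv : v ∉ S := fun hvS => h (hSbd v hvS)
        simp [h, hvanish f hf v hv]
    calc quadForm G f ≤ 2 * lapNormSq G f := quad_le_two_lap G f
      _ = 2 * stekNormSq G f := by rw [heq]
  exact csInf_le_csInf hbdd hne hsub
end

section
/- Fix k ≥ 1. Let T_k be the tree with vertices v₀, ..., v_k, w₁, ..., w_{k-1} and edges v_i ∼ v_{i+1} for 0 ≤ i ≤ k-1 and v_i ∼ w_i for 1 ≤ i ≤ k-1. Let G be a finite connected 3-regular graph, and let G_k be obtained from G by replacing each edge u₁∼u₂ by a fresh copy of T_k together with two new edges v₀∼u₁ and v₀∼u₂. Then the Cheeger constant satisfies h(G_k) ≥ min{ 1/(2k), h(G)/(3k + 1 + k·h(G)) }. -/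
open Finset Sum


/-- The Cheeger constant `h(G) = inf |∂Ω|/|Ω|` over nonempty `Ω` with `|Ω| ≤ |V|/2`. -/
noncomputable def cheeger {V : Type*} (G : SimpleGraph V) : ℝ :=
  sInf {r : ℝ | ∃ s : Set V, s.Nonempty ∧ 2 * s.ncard ≤ Nat.card V ∧
    r = (ebdry G s : ℝ) / (s.ncard : ℝ)}

/-- Adjacency in the tree `T_k`: vertices `0,…,k` are the path `v₀,…,v_k`, and vertex
`k + i` (for `1 ≤ i ≤ k-1`) is the pendant `w_i` attached to `v_i`. -/
def treeAdj (k : ℕ) (a b : ℕ) : Prop :=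
  (b = a + 1 ∧ b ≤ k) ∨ (a = b + 1 ∧ a ≤ k) ∨
  (1 ≤ a ∧ a ≤ k - 1 ∧ b = k + a) ∨ (1 ≤ b ∧ b ≤ k - 1 ∧ a = k + b)

/-- The tree-planting construction `G_k`: every edge `u₁ ∼ u₂` of `G` is replaced by a
fresh copy of `T_k` together with the two new edges `v₀ ∼ u₁` and `v₀ ∼ u₂`. -/
def plant {V : Type*} (G : SimpleGraph V) (k : ℕ) :
    SimpleGraph (V ⊕ (G.edgeSet × Fin (2 * k))) where
  Adj x y :=
    match x, y with
    | Sum.inl _, Sum.inl _ => False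
    | Sum.inl u, Sum.inr (e, j) => (j : ℕ) = 0 ∧ u ∈ (e : Sym2 V)
    | Sum.inr (e, j), Sum.inl u => (j : ℕ) = 0 ∧ u ∈ (e : Sym2 V)
    | Sum.inr (e, j), Sum.inr (e', j') => e = e' ∧ treeAdj k (j : ℕ) (j' : ℕ)
  symm := by
    constructor
    rintro (u | ⟨e, j⟩) (u' | ⟨e', j'⟩) h <;> simp_all [treeAdj] <;> tauto
  loopless := by
    constructor
    rintro (u | ⟨e, j⟩) h <;> simp_all [treeAdj] <;> omega

instance (k a b : ℕ) : Decidable (treeAdj k a b) := by unfold treeAdj; exact inferInstance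

section plantlemmas
variable {V : Type*} (G : SimpleGraph V) (k : ℕ)

lemma plant_adj_rr (e e' : G.edgeSet) (x y : Fin (2*k)) :
    (plant G k).Adj (inr (e,x)) (inr (e',y)) ↔ e = e' ∧ treeAdj k (x:ℕ) (y:ℕ) := Iff.rfl

lemma plant_adj_lr (u : V) (e : G.edgeSet) (x : Fin (2*k)) :
    (plant G k).Adj (inl u) (inr (e,x)) ↔ (x : ℕ) = 0 ∧ u ∈ (e : Sym2 V) := Iff.rfl

lemma plant_adj_rl (u : V) (e : G.edgeSet) (x : Fin (2*k)) :
    (plant G k).Adj (inr (e,x)) (inl u) ↔ (x : ℕ) = 0 ∧ u ∈ (e : Sym2 V) := Iff.rfl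

lemma plant_adj_ll (u u' : V) : ¬ (plant G k).Adj (inl u) (inl u') := fun h => h

variable [DecidableEq V] [DecidableRel G.Adj]

instance : DecidableRel (plant G k).Adj := fun x y =>
  match x, y with
  | inl u, inl u' => isFalse (plant_adj_ll G k u u')
  | inl u, inr (e,j) => decidable_of_iff _ (plant_adj_lr G k u e j).symm
  | inr (e,j), inl u => decidable_of_iff _ (plant_adj_rl G k u e j).symm
  | inr (e,j), inr (e',j') => decidable_of_iff _ (plant_adj_rr G k e e' j j').symm

end plantlemmas

section KeySection
variable {V : Type*} [Fintype V] [DecidableEq V] (G : SimpleGraph V) [DecidableRel G.Adj]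
  [Fintype G.edgeSet] (k : ℕ) (e₀ : G.edgeSet) (Ω : Set (V ⊕ (G.edgeSet × Fin (2*k))))
  [DecidablePred (· ∈ Ω)]

/-- which tree a pair belongs to -/
def fE : (V ⊕ (G.edgeSet × Fin (2*k))) × (V ⊕ (G.edgeSet × Fin (2*k))) → G.edgeSet := fun p =>
  match p with
  | (Sum.inr (e,_), _) => e
  | (Sum.inl _, Sum.inr (e,_)) => e
  | (Sum.inl _, Sum.inl _) => e₀

def BPf : Finset ((V ⊕ (G.edgeSet × Fin (2*k))) × (V ⊕ (G.edgeSet × Fin (2*k)))) :=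
  univ.filter fun p => p.1 ∈ Ω ∧ p.2 ∉ Ω ∧ (plant G k).Adj p.1 p.2

def dEf (e : G.edgeSet) : ℕ := ((BPf G k Ω).filter fun p => fE G k e₀ p = e).card

def sEf (e : G.edgeSet) : ℕ := (univ.filter fun j : Fin (2*k) => Sum.inr (e,j) ∈ Ω).card

def tEf (e : G.edgeSet) : ℕ := (univ.filter fun v => Sum.inl v ∈ Ω ∧ v ∈ (e:Sym2 V)).card

def AFf : Finset V := univ.filter fun v => Sum.inl v ∈ Ω

lemma ncard_setOf_eq_card_filter {α : Type*} [Fintype α] (p : α → Prop) [DecidablePred p] :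
    {x | p x}.ncard = (Finset.univ.filter p).card := by
  rw [Set.ncard_eq_toFinset_card', Set.toFinset_setOf]

lemma hb_sum : (BPf G k Ω).card = ∑ e, dEf G k e₀ Ω e :=
  Finset.card_eq_sum_card_fiberwise (fun p _ => mem_univ (fE G k e₀ p))

lemma hOmega_card : Ω.ncard = (AFf G k Ω).card + ∑ e, sEf G k Ω e := by
  have h1 := ncard_setOf_eq_card_filter (fun x => x ∈ Ω)
  rw [Set.setOf_mem_eq] at h1
  rw [h1, card_filter, Fintype.sum_sum_type]
  congr 1
  · rw [AFf, card_filter]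
  · rw [Fintype.sum_prod_type]
    exact Finset.sum_congr rfl (fun e _ => by rw [sEf, card_filter])

lemma degN_eq_degree (v : V) : degN G v = G.degree v := by
  rw [degN, ← SimpleGraph.neighborSet, Set.ncard_eq_toFinset_card', ← SimpleGraph.card_neighborFinset_eq_degree]
  congr 1

lemma inc_card (v : V) : (univ.filter fun e : G.edgeSet => v ∈ (e:Sym2 V)).card = G.degree v := by
  rw [← SimpleGraph.card_incidenceFinset_eq_degree]
  refine Finset.card_bij (fun e _ => (e : Sym2 V)) ?_ ?_ ?_
  · rintro ⟨e, he⟩ hm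
    simp only [mem_filter] at hm
    rw [SimpleGraph.mem_incidenceFinset]
    exact ⟨he, hm.2⟩
  · rintro ⟨e, he⟩ _ ⟨e', he'⟩ _ hee
    simpa using hee
  · intro e he
    rw [SimpleGraph.mem_incidenceFinset] at he
    exact ⟨⟨e, he.1⟩, by simp [he.2], rfl⟩

lemma handshakeA (hreg : ∀ v, degN G v = 3) :
    ∑ e, tEf G k Ω e = 3 * (AFf G k Ω).card := by
  have h1 : ∀ e, tEf G k Ω e = ∑ v, if (Sum.inl v ∈ Ω ∧ v ∈ (e:Sym2 V)) then 1 else 0 :=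
    fun e => by rw [tEf, card_filter]
  rw [Finset.sum_congr rfl (fun e _ => h1 e), Finset.sum_comm]
  have h2 : ∀ v : V, (∑ e : G.edgeSet, if (Sum.inl v ∈ Ω ∧ v ∈ (e:Sym2 V)) then 1 else 0)
      = if Sum.inl v ∈ Ω then 3 else 0 := by
    intro v
    by_cases hv : Sum.inl v ∈ Ω
    · simp only [hv, true_and, if_true]
      rw [← card_filter, inc_card, ← degN_eq_degree, hreg]
    · simp [hv]
  rw [Finset.sum_congr rfl (fun v _ => h2 v)]
  have h3 : ∀ v : V, (if Sum.inl v ∈ Ω then 3 else 0) = 3 * (if Sum.inl v ∈ Ω then 1 else 0) := by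
    intro v; split <;> simp
  rw [Finset.sum_congr rfl (fun v _ => h3 v), ← Finset.mul_sum, ← card_filter]
  rfl

lemma sym2_rep {α : Type*} (z : Sym2 α) : ∃ x y, z = s(x,y) := by
  induction z using Sym2.ind with
  | _ x y => exact ⟨x, y, rfl⟩

lemma tree_cross {k : ℕ} (Q : ℕ → Prop) :
    ∀ n, n < 2*k → ((Q n ↔ Q 0) ∨ ∃ x y, x < 2*k ∧ y < 2*k ∧ Q x ∧ ¬ Q y ∧ treeAdj k x y) := by
  intro n
  induction n using Nat.strong_induction_on with
  | _ n ih =>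
    intro hn
    rcases Nat.eq_zero_or_pos n with h0 | h0
    · subst h0; exact Or.inl Iff.rfl
    · have hk : 1 ≤ k := by omega
      have hex : ∃ p, p < n ∧ treeAdj k p n := by
        by_cases hnk : n ≤ k
        · exact ⟨n-1, by omega, Or.inl ⟨by omega, hnk⟩⟩
        · exact ⟨n-k, by omega, Or.inr (Or.inr (Or.inl ⟨by omega, by omega, by omega⟩))⟩
      obtain ⟨p, hpn, hadj⟩ := hex
      rcases ih p hpn (lt_trans hpn hn) with hiff | hex2
      · by_cases hq : Q n <;> by_cases hqp : Q p
        · exact Or.inl (by rw [← hiff]; tauto)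
        · exact Or.inr ⟨n, p, hn, lt_trans hpn hn, hq, hqp, by unfold treeAdj at *; tauto⟩
        · exact Or.inr ⟨p, n, lt_trans hpn hn, hn, hqp, hq, hadj⟩
        · exact Or.inl (by constructor <;> intro h <;> tauto)
      · exact Or.inr hex2

lemma tEf_formula (u₁ u₂ : V) (hne : u₁ ≠ u₂) (e : G.edgeSet) (hval : (e : Sym2 V) = s(u₁,u₂)) :
    tEf G k Ω e = (if Sum.inl u₁ ∈ Ω then 1 else 0) + (if Sum.inl u₂ ∈ Ω then 1 else 0) := by
  rw [tEf]
  have h1 : (univ.filter fun v => Sum.inl v ∈ Ω ∧ v ∈ (e:Sym2 V))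
      = ({u₁, u₂} : Finset V).filter fun v => Sum.inl v ∈ Ω := by
    ext v
    simp only [mem_filter, mem_univ, true_and, mem_insert, mem_singleton, hval, Sym2.mem_iff]
    tauto
  rw [h1]
  by_cases h1 : Sum.inl u₁ ∈ Ω <;> by_cases h2 : Sum.inl u₂ ∈ Ω <;>
    simp [Finset.filter_insert, Finset.filter_singleton, h1, h2, hne]

lemma sEf_le (e : G.edgeSet) : sEf G k Ω e ≤ 2*k :=
  le_trans (Finset.card_filter_le _ _) (by simp)

lemma internal_pair (e : G.edgeSet) (jin jout : Fin (2*k))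
    (hin : Sum.inr (e,jin) ∈ Ω) (hout : Sum.inr (e,jout) ∉ Ω) :
    ∃ x y : Fin (2*k), Sum.inr (e,x) ∈ Ω ∧ Sum.inr (e,y) ∉ Ω ∧ treeAdj k (x:ℕ) (y:ℕ) := by
  have h2k : 0 < 2*k := by
    rcases Nat.eq_zero_or_pos (2*k) with h | h
    · exact absurd jin.2 (by omega)
    · exact h
  set Q : ℕ → Prop := fun n => Sum.inr (e, (⟨n % (2*k), Nat.mod_lt n h2k⟩ : Fin (2*k))) ∈ Ω
    with hQ
  have hQj : ∀ j : Fin (2*k), Q (j : ℕ) ↔ Sum.inr (e, j) ∈ Ω := by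
    intro j
    have : (⟨(j:ℕ) % (2*k), Nat.mod_lt _ h2k⟩ : Fin (2*k)) = j := by
      apply Fin.ext; simp [Nat.mod_eq_of_lt j.2]
    rw [hQ]; simp only [this]
  have hfin : ∀ x y : ℕ, x < 2*k → y < 2*k → Q x → ¬ Q y → treeAdj k x y →
      ∃ x' y' : Fin (2*k), Sum.inr (e,x') ∈ Ω ∧ Sum.inr (e,y') ∉ Ω ∧ treeAdj k (x':ℕ) (y':ℕ) := by
    intro x y hx hy hqx hqy ht
    refine ⟨⟨x, hx⟩, ⟨y, hy⟩, ?_, ?_, ?_⟩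
    · rw [← hQj ⟨x, hx⟩]; exact hqx
    · rw [← hQj ⟨y, hy⟩]; exact hqy
    · exact ht
  rcases tree_cross Q (jin:ℕ) jin.2 with h1 | h1
  · rcases tree_cross Q (jout:ℕ) jout.2 with h2 | h2
    · exfalso
      have hq1 : Q (jin:ℕ) := (hQj jin).mpr hin
      have hq2 : ¬ Q (jout:ℕ) := fun hc => hout ((hQj jout).mp hc)
      rw [h1] at hq1; rw [h2] at hq2; exact hq2 hq1
    · obtain ⟨x, y, hx, hy, hqx, hqy, ht⟩ := h2
      exact hfin x y hx hy hqx hqy ht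
  · obtain ⟨x, y, hx, hy, hqx, hqy, ht⟩ := h1
    exact hfin x y hx hy hqx hqy ht

lemma dich (hk : 1 ≤ k) (e : G.edgeSet) :
    (sEf G k Ω e ≤ k * tEf G k Ω e + k * dEf G k e₀ Ω e ∨
      (tEf G k Ω e = 0 ∧ sEf G k Ω e ≤ 2*k * dEf G k e₀ Ω e)) ∧
    (tEf G k Ω e = 1 → 1 ≤ dEf G k e₀ Ω e) := by
  obtain ⟨u₁, u₂, hval⟩ := sym2_rep (e : Sym2 V)
  have hadj : G.Adj u₁ u₂ := G.mem_edgeSet.mp (hval ▸ e.2)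
  have hne : u₁ ≠ u₂ := hadj.ne
  have hm1 : u₁ ∈ (e : Sym2 V) := hval ▸ Sym2.mem_mk_left u₁ u₂
  have hm2 : u₂ ∈ (e : Sym2 V) := hval ▸ Sym2.mem_mk_right u₁ u₂
  have hT := tEf_formula G k Ω u₁ u₂ hne e hval
  have hs2k := sEf_le G k Ω e
  have hdd : dEf G k e₀ Ω e = ((BPf G k Ω).filter (fun p => fE G k e₀ p = e)).card := rfl
  set j0 : Fin (2*k) := ⟨0, by omega⟩ with hj0
  have hmem : ∀ p : (V ⊕ (G.edgeSet × Fin (2*k))) × (V ⊕ (G.edgeSet × Fin (2*k))),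
      p.1 ∈ Ω → p.2 ∉ Ω → (plant G k).Adj p.1 p.2 → fE G k e₀ p = e →
      p ∈ (BPf G k Ω).filter (fun p => fE G k e₀ p = e) := by
    intro p h1 h2 h3 h4
    simp only [BPf, mem_filter, mem_univ, true_and]
    exact ⟨⟨h1, h2, h3⟩, h4⟩
  by_cases hv0 : (Sum.inr (e, j0) : V ⊕ (G.edgeSet × Fin (2*k))) ∈ Ω
  · have hc : ∀ u, u ∈ (e : Sym2 V) → Sum.inl u ∉ Ω →
        (((Sum.inr (e, j0) : V ⊕ (G.edgeSet × Fin (2*k))), (Sum.inl u : V ⊕ (G.edgeSet × Fin (2*k)))))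
          ∈ (BPf G k Ω).filter (fun p => fE G k e₀ p = e) := by
      intro u hu hnu
      exact hmem _ hv0 hnu ((plant_adj_rl G k u e j0).mpr ⟨rfl, hu⟩) rfl
    by_cases h1 : Sum.inl u₁ ∈ Ω <;> by_cases h2 : Sum.inl u₂ ∈ Ω
    · refine ⟨Or.inl ?_, fun ht1 => ?_⟩
      · rw [hT, if_pos h1, if_pos h2]
        calc sEf G k Ω e ≤ 2*k := hs2k
        _ ≤ k * (1+1) + k * dEf G k e₀ Ω e := by
            have := Nat.zero_le (k * dEf G k e₀ Ω e); omega
      · rw [hT, if_pos h1, if_pos h2] at ht1; omega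
    · have hd1 : 1 ≤ dEf G k e₀ Ω e := by
        rw [hdd]; exact Finset.card_pos.mpr ⟨_, hc u₂ hm2 h2⟩
      refine ⟨Or.inl ?_, fun _ => hd1⟩
      rw [hT, if_pos h1, if_neg h2]
      have hkd : k * 1 ≤ k * dEf G k e₀ Ω e := Nat.mul_le_mul_left k hd1
      calc sEf G k Ω e ≤ 2*k := hs2k
      _ ≤ k * (1+0) + k * dEf G k e₀ Ω e := by omega
    · have hd1 : 1 ≤ dEf G k e₀ Ω e := by
        rw [hdd]; exact Finset.card_pos.mpr ⟨_, hc u₁ hm1 h1⟩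
      refine ⟨Or.inl ?_, fun _ => hd1⟩
      rw [hT, if_neg h1, if_pos h2]
      have hkd : k * 1 ≤ k * dEf G k e₀ Ω e := Nat.mul_le_mul_left k hd1
      calc sEf G k Ω e ≤ 2*k := hs2k
      _ ≤ k * (0+1) + k * dEf G k e₀ Ω e := by omega
    · have hd2 : 2 ≤ dEf G k e₀ Ω e := by
        rw [hdd]
        refine Finset.one_lt_card.mpr ⟨_, hc u₁ hm1 h1, _, hc u₂ hm2 h2, ?_⟩
        simp [hne]
      refine ⟨Or.inl ?_, fun ht1 => ?_⟩
      · rw [hT, if_neg h1, if_neg h2]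
        have hkd : k * 2 ≤ k * dEf G k e₀ Ω e := Nat.mul_le_mul_left k hd2
        calc sEf G k Ω e ≤ 2*k := hs2k
        _ ≤ k * (0+0) + k * dEf G k e₀ Ω e := by omega
      · rw [hT, if_neg h1, if_neg h2] at ht1; omega
  · by_cases hs0 : sEf G k Ω e = 0
    · refine ⟨Or.inl (by omega), fun ht1 => ?_⟩
      rw [hT] at ht1
      rcases (by omega : (if Sum.inl u₁ ∈ Ω then 1 else 0) = 1 ∨ (if Sum.inl u₂ ∈ Ω then 1 else 0) = 1)
        with hifu | hifu
      all_goals {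
        first
        | (have hu1 : Sum.inl u₁ ∈ Ω := by by_contra hc; simp [hc] at hifu
           rw [hdd]
           exact Finset.card_pos.mpr
             ⟨_, hmem (Sum.inl u₁, Sum.inr (e, j0)) hu1 hv0 ((plant_adj_lr G k u₁ e j0).mpr ⟨rfl, hm1⟩) rfl⟩)
        | (have hu2 : Sum.inl u₂ ∈ Ω := by by_contra hc; simp [hc] at hifu
           rw [hdd]
           exact Finset.card_pos.mpr
             ⟨_, hmem (Sum.inl u₂, Sum.inr (e, j0)) hu2 hv0 ((plant_adj_lr G k u₂ e j0).mpr ⟨rfl, hm2⟩) rfl⟩)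
      }
    · -- some vertex of the tree is inside, v₀ is outside : internal crossing pair
      have hjin : ∃ j : Fin (2*k), Sum.inr (e, j) ∈ Ω := by
        have hpos : 0 < sEf G k Ω e := Nat.pos_of_ne_zero hs0
        obtain ⟨j, hj⟩ := Finset.card_pos.mp hpos
        exact ⟨j, (Finset.mem_filter.mp hj).2⟩
      obtain ⟨jin, hjin⟩ := hjin
      obtain ⟨x, y, hx, hy, ht⟩ := internal_pair G k Ω e jin j0 hjin hv0
      have hint : ((Sum.inr (e, x) : V ⊕ (G.edgeSet × Fin (2*k))), (Sum.inr (e, y) : V ⊕ (G.edgeSet × Fin (2*k))))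
          ∈ (BPf G k Ω).filter (fun p => fE G k e₀ p = e) :=
        hmem _ hx hy ((plant_adj_rr G k e e x y).mpr ⟨rfl, ht⟩) rfl
      have hd1 : 1 ≤ dEf G k e₀ Ω e := by
        rw [hdd]; exact Finset.card_pos.mpr ⟨_, hint⟩
      have hconn : ∀ u, u ∈ (e : Sym2 V) → Sum.inl u ∈ Ω → 2 ≤ dEf G k e₀ Ω e := by
        intro u hu huin
        rw [hdd]
        refine Finset.one_lt_card.mpr ⟨_, hint, _,
          hmem (Sum.inl u, Sum.inr (e, j0)) huin hv0 ((plant_adj_lr G k u e j0).mpr ⟨rfl, hu⟩) rfl, ?_⟩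
        simp
      by_cases h1 : Sum.inl u₁ ∈ Ω
      · have hd2 := hconn u₁ hm1 h1
        refine ⟨Or.inl ?_, fun _ => hd1⟩
        have hkd : k * 2 ≤ k * dEf G k e₀ Ω e := Nat.mul_le_mul_left k hd2
        have := Nat.zero_le (k * tEf G k Ω e)
        omega
      · by_cases h2 : Sum.inl u₂ ∈ Ω
        · have hd2 := hconn u₂ hm2 h2
          refine ⟨Or.inl ?_, fun _ => hd1⟩
          have hkd : k * 2 ≤ k * dEf G k e₀ Ω e := Nat.mul_le_mul_left k hd2
          have := Nat.zero_le (k * tEf G k Ω e)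
          omega
        · refine ⟨Or.inr ⟨by rw [hT, if_neg h1, if_neg h2], ?_⟩, fun ht1 => hd1⟩
          have hkd : 2*k * 1 ≤ 2*k * dEf G k e₀ Ω e := Nat.mul_le_mul_left (2*k) hd1
          omega

lemma card_tE_one :
    ebdry G {v | Sum.inl v ∈ Ω} ≤ (univ.filter fun e : G.edgeSet => tEf G k Ω e = 1).card := by
  have h1 : ebdry G {v | Sum.inl v ∈ Ω}
      = (univ.filter fun p : V × V =>
          Sum.inl p.1 ∈ Ω ∧ ¬ (Sum.inl p.2 ∈ Ω) ∧ G.Adj p.1 p.2).card := by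
    have h0 : {p : V × V | p.1 ∈ {v | Sum.inl v ∈ Ω} ∧ p.2 ∉ {v | Sum.inl v ∈ Ω} ∧ G.Adj p.1 p.2}
        = {p : V × V | Sum.inl p.1 ∈ Ω ∧ ¬ (Sum.inl p.2 ∈ Ω) ∧ G.Adj p.1 p.2} := rfl
    rw [ebdry, h0, ncard_setOf_eq_card_filter (fun p : V × V =>
      Sum.inl p.1 ∈ Ω ∧ ¬ (Sum.inl p.2 ∈ Ω) ∧ G.Adj p.1 p.2)]
  rw [h1, ← Finset.card_image_of_injective
    (univ.filter fun e : G.edgeSet => tEf G k Ω e = 1) Subtype.val_injective]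
  apply Finset.card_le_card_of_injOn (fun p => s(p.1, p.2))
  · rintro ⟨x, y⟩ hp
    simp only [mem_coe, mem_filter, mem_univ, true_and] at hp
    obtain ⟨hx, hy, hadj⟩ := hp
    refine Finset.mem_image.mpr ⟨⟨s(x,y), G.mem_edgeSet.mpr hadj⟩, ?_, rfl⟩
    simp only [mem_filter, mem_univ, true_and]
    rw [tEf_formula G k Ω x y hadj.ne _ rfl, if_pos hx, if_neg hy]
  · rintro ⟨x, y⟩ hp ⟨x', y'⟩ hp' hee
    simp only [mem_coe, mem_filter, mem_univ, true_and] at hp hp'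
    rcases Sym2.eq_iff.mp hee with ⟨hxx, hyy⟩ | ⟨hxy, hyx⟩
    · simp only [Prod.mk.injEq]; exact ⟨hxx, hyy⟩
    · exfalso; subst hxy; subst hyx; exact hp'.2.1 hp.1

include e₀ in
lemma key (hreg : ∀ v, degN G v = 3) (hk : 1 ≤ k)
    (h : ℝ) (h0 : 0 ≤ h)
    (hle : ∀ A : Set V, A.Nonempty → 2 * A.ncard ≤ Nat.card V → h * A.ncard ≤ ebdry G A)
    (hA : 2 * {v | Sum.inl v ∈ Ω}.ncard ≤ Nat.card V) :
    min (1 / (2 * (k : ℝ))) (h / (3 * (k : ℝ) + 1 + (k : ℝ) * h)) * Ω.ncard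
      ≤ (ebdry (plant G k) Ω : ℝ) := by
  set α := 1 / (2 * (k:ℝ)) with hα
  set β := h / (3 * (k:ℝ) + 1 + (k:ℝ) * h) with hβ
  set I : Finset G.edgeSet :=
    univ.filter (fun e => ¬ (sEf G k Ω e ≤ k * tEf G k Ω e + k * dEf G k e₀ Ω e)) with hI
  set a := (AFf G k Ω).card with ha
  set P := ∑ e ∈ I, sEf G k Ω e with hPdef
  set QS := ∑ e ∈ Iᶜ, sEf G k Ω e with hQSdef
  set bI := ∑ e ∈ I, dEf G k e₀ Ω e with hbIdef
  set c := ∑ e ∈ Iᶜ, dEf G k e₀ Ω e with hcdef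
  -- boundary count
  have hEB : ebdry (plant G k) Ω = bI + c := by
    have h1 : ebdry (plant G k) Ω = (BPf G k Ω).card := by
      rw [ebdry, BPf, ncard_setOf_eq_card_filter]
    rw [h1, hb_sum G k e₀ Ω, hbIdef, hcdef, Finset.sum_add_sum_compl]
  -- size count
  have hΩn : Ω.ncard = a + (P + QS) := by
    rw [hOmega_card G k Ω, hPdef, hQSdef, Finset.sum_add_sum_compl]
  -- bad trees
  have hP : P ≤ 2*k * bI := by
    rw [hbIdef, Finset.mul_sum, hPdef]
    refine Finset.sum_le_sum (fun e he => ?_)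
    have hnl : ¬ (sEf G k Ω e ≤ k * tEf G k Ω e + k * dEf G k e₀ Ω e) :=
      (Finset.mem_filter.mp he).2
    exact ((dich G k e₀ Ω hk e).1.resolve_left hnl).2
  -- good trees
  have hQ : QS ≤ 3*k*a + k * c := by
    have hts := handshakeA G k Ω hreg
    have h2 : QS ≤ ∑ e ∈ Iᶜ, (k * tEf G k Ω e + k * dEf G k e₀ Ω e) := by
      refine Finset.sum_le_sum (fun e he => ?_)
      have : e ∉ I := Finset.mem_compl.mp he
      rw [hI, Finset.mem_filter] at this
      push_neg at this
      exact this (Finset.mem_univ e)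
    have h3 : ∑ e ∈ Iᶜ, (k * tEf G k Ω e + k * dEf G k e₀ Ω e)
        = k * (∑ e ∈ Iᶜ, tEf G k Ω e) + k * c := by
      rw [Finset.sum_add_distrib, Finset.mul_sum, hcdef, Finset.mul_sum]
    have h4 : ∑ e ∈ Iᶜ, tEf G k Ω e ≤ 3 * a := by
      rw [← hts]
      exact Finset.sum_le_sum_of_subset (Finset.subset_univ _)
    calc QS ≤ k * (∑ e ∈ Iᶜ, tEf G k Ω e) + k * c := by rw [← h3]; exact h2
    _ ≤ k * (3 * a) + k * c := by
        exact Nat.add_le_add_right (Nat.mul_le_mul_left k h4) _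
    _ = 3*k*a + k*c := by ring
  -- Cheeger bound on the base part
  have haA : {v | Sum.inl v ∈ Ω}.ncard = a := by
    rw [ncard_setOf_eq_card_filter]; rfl
  have hha : h * (a:ℝ) ≤ (c:ℝ) := by
    have hS1 : (univ.filter fun e : G.edgeSet => tEf G k Ω e = 1) ⊆ Iᶜ := by
      intro e he
      have ht1 : tEf G k Ω e = 1 := (Finset.mem_filter.mp he).2
      have hl : sEf G k Ω e ≤ k * tEf G k Ω e + k * dEf G k e₀ Ω e := by
        rcases (dich G k e₀ Ω hk e).1 with hl | hr
        · exact hl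
        · omega
      rw [Finset.mem_compl, hI, Finset.mem_filter]
      push_neg
      intro _
      exact hl
    have hcard : (univ.filter fun e : G.edgeSet => tEf G k Ω e = 1).card ≤ c := by
      have h5 : ∀ e ∈ (univ.filter fun e : G.edgeSet => tEf G k Ω e = 1),
          1 ≤ dEf G k e₀ Ω e := fun e he =>
        (dich G k e₀ Ω hk e).2 (Finset.mem_filter.mp he).2
      have h6 := Finset.card_nsmul_le_sum
        (univ.filter fun e : G.edgeSet => tEf G k Ω e = 1) (dEf G k e₀ Ω) 1 h5
      simp only [smul_eq_mul, mul_one] at h6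
      exact le_trans h6 (Finset.sum_le_sum_of_subset hS1)
    rcases Nat.eq_zero_or_pos a with haz | hapos
    · rw [haz]
      simp only [Nat.cast_zero, mul_zero]
      exact Nat.cast_nonneg c
    · have hne : {v | Sum.inl v ∈ Ω}.Nonempty := by
        apply Set.nonempty_of_ncard_ne_zero
        omega
      have h7 := hle _ hne (haA ▸ hA)
      rw [haA] at h7
      have h8 : (ebdry G {v | Sum.inl v ∈ Ω} : ℝ) ≤ (c : ℝ) := by
        exact_mod_cast le_trans (card_tE_one G k Ω) hcard
      linarith
  -- final arithmetic
  have hkpos : (0:ℝ) < k := by exact_mod_cast hk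
  have hD : (0:ℝ) < 3 * (k:ℝ) + 1 + (k:ℝ) * h := by nlinarith
  have hα0 : 0 < α := by rw [hα]; positivity
  have hβ0 : 0 ≤ β := by rw [hβ]; exact div_nonneg h0 hD.le
  have hm1 : min α β ≤ α := min_le_left _ _
  have hm2 : min α β ≤ β := min_le_right _ _
  have hm0 : 0 ≤ min α β := le_min hα0.le hβ0
  have hPc : (P:ℝ) ≤ 2*(k:ℝ) * bI := by exact_mod_cast hP
  have hQc : (QS:ℝ) ≤ 3*(k:ℝ)*a + (k:ℝ) * c := by exact_mod_cast hQ
  have t2 : min α β * P ≤ (bI : ℝ) := by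
    have s1 : min α β * P ≤ α * P :=
      mul_le_mul_of_nonneg_right hm1 (Nat.cast_nonneg P)
    have s2 : α * P ≤ α * (2*(k:ℝ) * bI) :=
      mul_le_mul_of_nonneg_left hPc hα0.le
    have s3 : α * (2*(k:ℝ) * bI) = bI := by
      rw [hα]; field_simp
    linarith
  have t1 : min α β * ((a:ℝ) + QS) ≤ (c : ℝ) := by
    have hc0 : (0:ℝ) ≤ c := Nat.cast_nonneg c
    have s1 : min α β * ((a:ℝ) + QS) ≤ β * ((a:ℝ) + QS) :=
      mul_le_mul_of_nonneg_right hm2 (add_nonneg (Nat.cast_nonneg a) (Nat.cast_nonneg QS))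
    have s2 : h * ((a:ℝ) + QS) ≤ (3 * (k:ℝ) + 1 + (k:ℝ) * h) * c := by
      have s3 : h * ((a:ℝ) + QS) ≤ h * ((3*(k:ℝ)+1) * a + (k:ℝ) * c) := by
        apply mul_le_mul_of_nonneg_left _ h0
        linarith
      have s4 : (3*(k:ℝ)+1) * (h * a) ≤ (3*(k:ℝ)+1) * c :=
        mul_le_mul_of_nonneg_left hha (by linarith)
      nlinarith
    have s5 : β * ((a:ℝ) + QS) ≤ c := by
      rw [hβ, div_mul_eq_mul_div, div_le_iff₀ hD]
      calc h * ((a:ℝ) + QS) ≤ (3 * (k:ℝ) + 1 + (k:ℝ) * h) * c := s2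
      _ = c * (3 * (k:ℝ) + 1 + (k:ℝ) * h) := by ring
    linarith
  rw [hEB, hΩn]
  push_cast
  linarith

end KeySection

lemma ebdry_compl {V : Type*} (G : SimpleGraph V) (s : Set V) : ebdry G sᶜ = ebdry G s := by
  rw [ebdry, ebdry]
  have h1 : {p : V × V | p.1 ∈ sᶜ ∧ p.2 ∉ sᶜ ∧ G.Adj p.1 p.2}
      = Prod.swap '' {p : V × V | p.1 ∈ s ∧ p.2 ∉ s ∧ G.Adj p.1 p.2} := by
    ext ⟨x, y⟩
    rw [Set.image_swap_eq_preimage_swap]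
    simp only [Set.mem_setOf_eq, Set.mem_compl_iff, Set.mem_preimage, Prod.swap_prod_mk, not_not]
    constructor
    · rintro ⟨hx, hy, hadj⟩; exact ⟨hy, hx, hadj.symm⟩
    · rintro ⟨hy, hx, hadj⟩; exact ⟨hx, hy, hadj.symm⟩
  rw [h1, Set.ncard_image_of_injective _ Prod.swap_injective]

/-- For a finite connected 3-regular graph `G`, the Cheeger constant of the planted graph
`G_k` satisfies `h(G_k) ≥ min{1/(2k), h(G)/(3k + 1 + k h(G))}`. -/
theorem stmt14 {V : Type*} [Finite V] (G : SimpleGraph V) (hconn : G.Connected)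
    (hreg : ∀ v, degN G v = 3) (k : ℕ) (hk : 1 ≤ k) :
    min (1 / (2 * (k : ℝ))) (cheeger G / (3 * (k : ℝ) + 1 + (k : ℝ) * cheeger G)) ≤
      cheeger (plant G k) := by
  classical
  cases nonempty_fintype V
  obtain ⟨v⟩ := hconn.nonempty
  have hv3 : {w | G.Adj v w}.ncard = 3 := hreg v
  have hwne : {w | G.Adj v w}.Nonempty := Set.nonempty_of_ncard_ne_zero (by omega)
  obtain ⟨w, hvw⟩ := hwne
  have hvw' : G.Adj v w := hvw
  set e₀ : G.edgeSet := ⟨s(v, w), G.mem_edgeSet.mpr hvw'⟩ with he₀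
  set h := cheeger G with hh
  have h0 : 0 ≤ h := by
    rw [hh, cheeger]
    apply Real.sInf_nonneg
    rintro r ⟨s, hs1, hs2, rfl⟩
    positivity
  have hle : ∀ A : Set V, A.Nonempty → 2 * A.ncard ≤ Nat.card V →
      h * A.ncard ≤ ebdry G A := by
    intro A hA1 hA2
    have hbdd : BddBelow {r : ℝ | ∃ s : Set V, s.Nonempty ∧ 2 * s.ncard ≤ Nat.card V ∧
        r = (ebdry G s : ℝ) / (s.ncard : ℝ)} := by
      refine ⟨0, ?_⟩
      rintro r ⟨s, hs1, hs2, rfl⟩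
      positivity
    have hmem := csInf_le hbdd ⟨A, hA1, hA2, rfl⟩
    rw [← cheeger, ← hh] at hmem
    have hpos : (0:ℝ) < (A.ncard : ℝ) := by
      have := (Set.ncard_pos A.toFinite).mpr hA1
      exact_mod_cast this
    calc h * A.ncard ≤ ((ebdry G A : ℝ) / (A.ncard : ℝ)) * A.ncard :=
        mul_le_mul_of_nonneg_right hmem hpos.le
    _ = ebdry G A := div_mul_cancel₀ _ hpos.ne'
  rw [show cheeger (plant G k) = sInf {r : ℝ | ∃ s : Set (V ⊕ (G.edgeSet × Fin (2*k))),
      s.Nonempty ∧ 2 * s.ncard ≤ Nat.card (V ⊕ (G.edgeSet × Fin (2*k))) ∧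
      r = (ebdry (plant G k) s : ℝ) / (s.ncard : ℝ)} from rfl]
  have hW2 : 2 ≤ Nat.card (V ⊕ (G.edgeSet × Fin (2*k))) := by
    rw [Nat.card_eq_fintype_card, Fintype.card_sum]
    have hVc : 1 < Fintype.card V := Fintype.one_lt_card_iff_nontrivial.mpr
      ⟨⟨v, w, hvw'.ne⟩⟩
    omega
  apply le_csInf
  · refine ⟨(ebdry (plant G k) {Sum.inl v} : ℝ) / ((({Sum.inl v} : Set _).ncard : ℝ)),
      {Sum.inl v}, Set.singleton_nonempty _, ?_, rfl⟩
    rw [Set.ncard_singleton]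
    omega
  · rintro r ⟨s, hs1, hs2, rfl⟩
    have hspos : (0:ℝ) < (s.ncard : ℝ) := by
      have := (Set.ncard_pos s.toFinite).mpr hs1
      exact_mod_cast this
    rw [le_div_iff₀ hspos]
    by_cases hcase : 2 * {v' | Sum.inl v' ∈ s}.ncard ≤ Nat.card V
    · exact key G k e₀ s hreg hk h h0 hle hcase
    · have hcompl : {v' | Sum.inl v' ∈ sᶜ} = {v' | Sum.inl v' ∈ s}ᶜ := rfl
      have hsum := Set.ncard_add_ncard_compl {v' | Sum.inl v' ∈ s}
      have hc2 : 2 * {v' | Sum.inl v' ∈ sᶜ}.ncard ≤ Nat.card V := by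
        rw [hcompl]; omega
      have hkey := key G k e₀ sᶜ hreg hk h h0 hle hc2
      rw [ebdry_compl] at hkey
      have hsum2 := Set.ncard_add_ncard_compl s
      have hsc : s.ncard ≤ sᶜ.ncard := by omega
      have hD0 : (0:ℝ) ≤ 3*(k:ℝ)+1+(k:ℝ)*h := by
        have hk0 : (0:ℝ) ≤ (k:ℝ) := Nat.cast_nonneg k
        nlinarith
      have hm0 : (0:ℝ) ≤ min (1 / (2 * (k : ℝ))) (h / (3 * (k : ℝ) + 1 + (k : ℝ) * h)) := by
        apply le_min
        · positivity
        · rcases eq_or_lt_of_le hD0 with hD | hD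
          · rw [← hD]; simp
          · exact div_nonneg h0 hD.le
      calc min (1 / (2 * (k : ℝ))) (h / (3 * (k : ℝ) + 1 + (k : ℝ) * h)) * s.ncard
          ≤ min (1 / (2 * (k : ℝ))) (h / (3 * (k : ℝ) + 1 + (k : ℝ) * h)) * sᶜ.ncard := by
            apply mul_le_mul_of_nonneg_left _ hm0
            exact_mod_cast hsc
      _ ≤ (ebdry (plant G k) s : ℝ) := hkey
end
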